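/- Let H be a complex Hilbert space, let (e_n)_{n∈ℤ} be a Hilbert (orthonormal) basis of H, and let U be a bounded linear operator on H with U e_n = e_{n+1} for all n ∈ ℤ (a bilateral shift of multiplicity one). Let λ ∈ ℂ with λ ≠ 1. If X is a bounded linear operator on H satisfying (I − U*)∘X = λ·(X∘(I − U*)), where U* denotes the Hilbert-space adjoint of U, then X = 0. (Consequently, the only extended eigenvalue of I − U* is 1.) -/

import Mathlib

open MeasureTheory AddCircle Filter Set
open scoped ENNReal ComplexConjugate

noncomputable section Stmt18Aux

instance stmt18_fact : Fact ((0:ℝ) < 1) := ⟨one_pos⟩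

abbrev stmt18μ : Measure (AddCircle (1:ℝ)) := haarAddCircle

lemma stmt18_vol_eq : (volume : Measure (AddCircle (1:ℝ))) = stmt18μ := by
  rw [volume_eq_smul_haarAddCircle]
  simp

instance stmt18_noAtoms : NullSingletonClass stmt18μ := by
  rw [← stmt18_vol_eq]
  constructor
  intro x
  by_contra h
  have hfin : (volume : Measure (AddCircle (1:ℝ))) {x} ≠ ∞ := measure_ne_top _ _
  have hpos : 0 < ((volume : Measure (AddCircle (1:ℝ))) {x}).toReal :=
    ENNReal.toReal_pos h hfin
  set c := ((volume : Measure (AddCircle (1:ℝ))) {x}).toReal with hc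
  have hle : (volume : Measure (AddCircle (1:ℝ))) {x} ≤ ENNReal.ofReal (min 1 (2 * (c/4))) := by
    have : ({x} : Set (AddCircle (1:ℝ))) ⊆ Metric.closedBall x (c/4) := by
      intro y hy
      simp only [mem_singleton_iff] at hy
      subst hy
      simp only [Metric.mem_closedBall, dist_self]
      positivity
    calc (volume : Measure (AddCircle (1:ℝ))) {x} ≤ volume (Metric.closedBall x (c/4)) :=
          measure_mono this
      _ = ENNReal.ofReal (min 1 (2 * (c/4))) := volume_closedBall (T := 1) _
  have hlt : ENNReal.ofReal (min 1 (2 * (c/4))) < (volume : Measure (AddCircle (1:ℝ))) {x} := by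
    have h1 : min 1 (2 * (c/4)) ≤ c/2 := (min_le_right _ _).trans (by linarith)
    calc ENNReal.ofReal (min 1 (2 * (c/4))) ≤ ENNReal.ofReal (c/2) := ENNReal.ofReal_le_ofReal h1
      _ < ENNReal.ofReal c := by
          apply ENNReal.ofReal_lt_ofReal_iff_of_nonneg (by linarith) |>.mpr
          linarith
      _ = (volume : Measure (AddCircle (1:ℝ))) {x} := ENNReal.ofReal_toReal hfin
  exact absurd (hle.trans_lt hlt) (lt_irrefl _)

/-- Multiplication by a continuous function, as a continuous linear map on L². -/
def stmt18mulMem (g : C(AddCircle (1:ℝ), ℂ)) (ψ : Lp ℂ 2 stmt18μ) :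
    MemLp (fun x => g x * ψ x) 2 stmt18μ := by
  refine MemLp.of_le_mul (c := ‖g‖) (Lp.memLp ψ)
    ((g.continuous.aestronglyMeasurable).mul (Lp.aestronglyMeasurable ψ)) ?_
  filter_upwards with x
  rw [norm_mul]
  exact mul_le_mul_of_nonneg_right (g.norm_coe_le_norm x) (norm_nonneg _)

def stmt18mul (g : C(AddCircle (1:ℝ), ℂ)) : Lp ℂ 2 stmt18μ →L[ℂ] Lp ℂ 2 stmt18μ :=
  LinearMap.mkContinuous
    { toFun := fun ψ => (stmt18mulMem g ψ).toLp _
      map_add' := by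
        intro ψ ζ
        apply Lp.ext
        have h1 := (stmt18mulMem g (ψ + ζ)).coeFn_toLp
        have h2 := (stmt18mulMem g ψ).coeFn_toLp
        have h3 := (stmt18mulMem g ζ).coeFn_toLp
        have h4 : ⇑(ψ + ζ) =ᵐ[stmt18μ] ⇑ψ + ⇑ζ := Lp.coeFn_add ψ ζ
        have h5 : ⇑((stmt18mulMem g ψ).toLp _ + (stmt18mulMem g ζ).toLp _)
            =ᵐ[stmt18μ] ⇑((stmt18mulMem g ψ).toLp _) + ⇑((stmt18mulMem g ζ).toLp _) :=
          Lp.coeFn_add _ _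
        filter_upwards [h1, h2, h3, h4, h5] with x e1 e2 e3 e4 e5
        simp only [e1, e5, Pi.add_apply, e2, e3, e4]
        ring
      map_smul' := by
        intro a ψ
        apply Lp.ext
        have h1 := (stmt18mulMem g (a • ψ)).coeFn_toLp
        have h2 := (stmt18mulMem g ψ).coeFn_toLp
        have h4 : ⇑(a • ψ) =ᵐ[stmt18μ] a • ⇑ψ := Lp.coeFn_smul a ψ
        have h5 : ⇑(a • (stmt18mulMem g ψ).toLp _) =ᵐ[stmt18μ]
            a • ⇑((stmt18mulMem g ψ).toLp _) := Lp.coeFn_smul a _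
        filter_upwards [h1, h2, h4, h5] with x e1 e2 e4 e5
        simp only [e1, e5, Pi.smul_apply, e2, e4, smul_eq_mul, RingHom.id_apply]
        ring }
    ‖g‖
    (by
      intro ψ
      simp only [LinearMap.coe_mk, AddHom.coe_mk]
      rw [Lp.norm_toLp]
      have hb : eLpNorm (fun x => g x * ψ x) 2 stmt18μ ≤
          ENNReal.ofReal ‖g‖ * eLpNorm (⇑ψ) 2 stmt18μ := by
        apply eLpNorm_le_mul_eLpNorm_of_ae_le_mul
        filter_upwards with x
        rw [norm_mul]
        exact mul_le_mul_of_nonneg_right (g.norm_coe_le_norm x) (norm_nonneg _)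
      calc (eLpNorm (fun x => g x * ψ x) 2 stmt18μ).toReal
          ≤ (ENNReal.ofReal ‖g‖ * eLpNorm (⇑ψ) 2 stmt18μ).toReal := by
            apply ENNReal.toReal_mono _ hb
            exact ENNReal.mul_ne_top ENNReal.ofReal_ne_top (Lp.eLpNorm_ne_top ψ)
        _ = ‖g‖ * ‖ψ‖ := by
            rw [ENNReal.toReal_mul, ENNReal.toReal_ofReal (norm_nonneg _), Lp.norm_def])

lemma stmt18mul_ae (g : C(AddCircle (1:ℝ), ℂ)) (ψ : Lp ℂ 2 stmt18μ) :
    ⇑(stmt18mul g ψ) =ᵐ[stmt18μ] fun x => g x * ψ x :=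
  (stmt18mulMem g ψ).coeFn_toLp



lemma stmt18key (g : AddCircle (1:ℝ) → ℂ) (hg : Measurable g)
    (hnull : stmt18μ {x | ‖g x‖ = 1} = 0)
    (f : ℤ → Lp ℂ 2 stmt18μ) (C : ℝ)
    (hC : ∀ n, ‖f n‖ ≤ C)
    (hrec : ∀ (n : ℤ) (k : ℕ),
      ⇑(f (n - k)) =ᵐ[stmt18μ] fun x => (g x)^k * (f n : AddCircle (1:ℝ) → ℂ) x) :
    f 0 = 0 := by
  have hint : ∀ n, Integrable (fun x => ‖(f n : AddCircle (1:ℝ) → ℂ) x‖^2) stmt18μ := by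
    intro n
    have h := (Lp.memLp (f n)).integrable_norm_rpow (by norm_num) (by norm_num)
    have h2 : ((2:ℝ≥0∞)).toReal = ((2:ℕ):ℝ) := by norm_num
    rw [h2] at h
    simpa [Real.rpow_natCast] using h
  have hnormint : ∀ n, ∫ x, ‖(f n : AddCircle (1:ℝ) → ℂ) x‖^2 ∂stmt18μ = ‖f n‖^2 := by
    intro n
    have h1 : (inner ℂ (f n) (f n) : ℂ) =
        ∫ x, (inner ℂ ((f n : AddCircle (1:ℝ) → ℂ) x) ((f n : AddCircle (1:ℝ) → ℂ) x) : ℂ)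
          ∂stmt18μ := L2.inner_def (f n) (f n)
    calc ∫ x, ‖(f n : AddCircle (1:ℝ) → ℂ) x‖^2 ∂stmt18μ
        = ∫ x, RCLike.re
            (inner ℂ ((f n : AddCircle (1:ℝ) → ℂ) x) ((f n : AddCircle (1:ℝ) → ℂ) x) : ℂ)
            ∂stmt18μ := by
          apply integral_congr_ae
          filter_upwards with x
          exact (inner_self_eq_norm_sq (𝕜 := ℂ) _).symm
      _ = RCLike.re (∫ x,
            (inner ℂ ((f n : AddCircle (1:ℝ) → ℂ) x) ((f n : AddCircle (1:ℝ) → ℂ) x) : ℂ)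
            ∂stmt18μ) := integral_re (L2.integrable_inner (𝕜 := ℂ) (f n) (f n))
      _ = RCLike.re (inner ℂ (f n) (f n) : ℂ) := by rw [← h1]
      _ = ‖f n‖^2 := inner_self_eq_norm_sq (𝕜 := ℂ) _
  have hbound : ∀ n, ∫ x, ‖(f n : AddCircle (1:ℝ) → ℂ) x‖^2 ∂stmt18μ ≤ C^2 := by
    intro n
    rw [hnormint n]
    exact pow_le_pow_left₀ (norm_nonneg _) (hC n) 2
  set F : AddCircle (1:ℝ) → ℝ := fun x => ‖(f 0 : AddCircle (1:ℝ) → ℂ) x‖^2 with hF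
  -- Part A : |g| > 1
  have hA : ∀ j : ℕ, ∀ᵐ x ∂stmt18μ,
      x ∈ {x | 1 + ((j:ℝ)+1)⁻¹ ≤ ‖g x‖} → (f 0 : AddCircle (1:ℝ) → ℂ) x = 0 := by
    intro j
    set r : ℝ := 1 + ((j:ℝ)+1)⁻¹ with hrdef
    have hr1 : 1 < r := by
      rw [hrdef]; nlinarith [Nat.cast_nonneg (α := ℝ) j,
        inv_pos.mpr (by positivity : (0:ℝ) < (j:ℝ)+1)]
    set A : Set (AddCircle (1:ℝ)) := {x | r ≤ ‖g x‖} with hAdef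
    have hmA : MeasurableSet A := measurableSet_le measurable_const hg.norm
    set I : ℝ := ∫ x in A, F x ∂stmt18μ with hI
    have hI0 : 0 ≤ I := integral_nonneg fun x => by positivity
    have hIb : ∀ k : ℕ, (r^2)^k * I ≤ C^2 := by
      intro k
      have e1 : ∀ᵐ x ∂stmt18μ.restrict A,
          (r^2)^k * F x ≤ ‖(f (0 - (k:ℕ)) : AddCircle (1:ℝ) → ℂ) x‖^2 := by
        have h := ae_restrict_of_ae (s := A) (hrec 0 k)
        filter_upwards [h, ae_restrict_mem hmA] with x hx hxA
        have hxA' : r ≤ ‖g x‖ := hxA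
        rw [hx, norm_mul, mul_pow, norm_pow]
        have h2 : r^2 ≤ ‖g x‖^2 := by nlinarith
        have h3 : (r^2)^k ≤ (‖g x‖^2)^k := pow_le_pow_left₀ (by positivity) h2 k
        have h4 : (‖g x‖^2)^k = (‖g x‖^k)^2 := by ring
        rw [h4] at h3
        exact mul_le_mul_of_nonneg_right h3 (by positivity)
      calc (r^2)^k * I = ∫ x in A, (r^2)^k * F x ∂stmt18μ := (integral_const_mul _ _).symm
        _ ≤ ∫ x in A, ‖(f (0 - (k:ℕ)) : AddCircle (1:ℝ) → ℂ) x‖^2 ∂stmt18μ :=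
            integral_mono_ae ((hint 0).restrict.const_mul _) ((hint _).restrict) e1
        _ ≤ ∫ x, ‖(f (0 - (k:ℕ)) : AddCircle (1:ℝ) → ℂ) x‖^2 ∂stmt18μ :=
            setIntegral_le_integral (hint _) (Filter.Eventually.of_forall fun x => by positivity)
        _ ≤ C^2 := hbound _
    have hIz : I = 0 := by
      by_contra hne
      have hIpos : 0 < I := lt_of_le_of_ne hI0 (Ne.symm hne)
      have hr2 : 1 < r^2 := by nlinarith
      have ht := (tendsto_pow_atTop_atTop_of_one_lt hr2).atTop_mul_const hIpos
      obtain ⟨k, hk⟩ := (ht.eventually_gt_atTop (C^2)).exists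
      exact absurd (hIb k) (not_le.mpr hk)
    have hFz := (integral_eq_zero_iff_of_nonneg (fun x => by positivity)
      ((hint 0).restrict)).mp hIz
    have := (ae_restrict_iff' hmA).mp hFz
    filter_upwards [this] with x hx hxA
    have h5 : ‖(f 0 : AddCircle (1:ℝ) → ℂ) x‖ ^ 2 = 0 := hx hxA
    exact norm_eq_zero.mp (pow_eq_zero_iff two_ne_zero |>.mp h5)
  -- Part B : |g| < 1
  have hB : ∀ j : ℕ, ∀ᵐ x ∂stmt18μ,
      x ∈ {x | ‖g x‖ ≤ 1 - ((j:ℝ)+1)⁻¹} → (f 0 : AddCircle (1:ℝ) → ℂ) x = 0 := by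
    intro j
    set s : ℝ := 1 - ((j:ℝ)+1)⁻¹ with hsdef
    have hs0 : 0 ≤ s := by
      rw [hsdef]
      have : ((j:ℝ)+1)⁻¹ ≤ 1 := by
        rw [inv_le_one_iff₀]; right; linarith [Nat.cast_nonneg (α := ℝ) j]
      linarith
    have hs1 : s < 1 := by
      rw [hsdef]
      have : (0:ℝ) < ((j:ℝ)+1)⁻¹ := by positivity
      linarith
    set B : Set (AddCircle (1:ℝ)) := {x | ‖g x‖ ≤ s} with hBdef
    have hmB : MeasurableSet B := measurableSet_le hg.norm measurable_const
    set I : ℝ := ∫ x in B, F x ∂stmt18μ with hI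
    have hI0 : 0 ≤ I := integral_nonneg fun x => by positivity
    have hIb : ∀ k : ℕ, I ≤ (s^2)^k * C^2 := by
      intro k
      have hidx : ((k:ℤ) - (k:ℕ)) = 0 := by simp
      have h0 := hrec (k:ℤ) k
      rw [hidx] at h0
      have e1 : ∀ᵐ x ∂stmt18μ.restrict B,
          F x ≤ (s^2)^k * ‖(f (k:ℤ) : AddCircle (1:ℝ) → ℂ) x‖^2 := by
        have h := ae_restrict_of_ae (s := B) h0
        filter_upwards [h, ae_restrict_mem hmB] with x hx hxB
        have hxB' : ‖g x‖ ≤ s := hxB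
        show ‖(f 0 : AddCircle (1:ℝ) → ℂ) x‖^2 ≤ _
        rw [hx, norm_mul, mul_pow, norm_pow]
        have h2 : ‖g x‖^2 ≤ s^2 := by nlinarith [norm_nonneg (g x)]
        have h3 : (‖g x‖^2)^k ≤ (s^2)^k := pow_le_pow_left₀ (by positivity) h2 k
        have h4 : (‖g x‖^2)^k = (‖g x‖^k)^2 := by ring
        rw [h4] at h3
        exact mul_le_mul_of_nonneg_right h3 (by positivity)
      calc I ≤ ∫ x in B, (s^2)^k * ‖(f (k:ℤ) : AddCircle (1:ℝ) → ℂ) x‖^2 ∂stmt18μ :=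
            integral_mono_ae ((hint 0).restrict) (((hint _).restrict).const_mul _) e1
        _ = (s^2)^k * ∫ x in B, ‖(f (k:ℤ) : AddCircle (1:ℝ) → ℂ) x‖^2 ∂stmt18μ :=
            integral_const_mul _ _
        _ ≤ (s^2)^k * C^2 := by
            apply mul_le_mul_of_nonneg_left _ (by positivity)
            exact (setIntegral_le_integral (hint _)
              (Filter.Eventually.of_forall fun x => by positivity)).trans (hbound _)
    have hIz : I = 0 := by
      have hs2 : s^2 < 1 := by nlinarith
      have ht : Tendsto (fun k : ℕ => (s^2)^k * C^2) atTop (nhds 0) := by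
        simpa using (tendsto_pow_atTop_nhds_zero_of_lt_one (by positivity) hs2).mul_const (C^2)
      have : I ≤ 0 := ge_of_tendsto' ht hIb
      linarith
    have hFz := (integral_eq_zero_iff_of_nonneg (fun x => by positivity)
      ((hint 0).restrict)).mp hIz
    have := (ae_restrict_iff' hmB).mp hFz
    filter_upwards [this] with x hx hxB
    have h5 : ‖(f 0 : AddCircle (1:ℝ) → ℂ) x‖ ^ 2 = 0 := hx hxB
    exact norm_eq_zero.mp (pow_eq_zero_iff two_ne_zero |>.mp h5)
  have hAae : ∀ᵐ x ∂stmt18μ, ∀ j : ℕ,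
      x ∈ {x | 1 + ((j:ℝ)+1)⁻¹ ≤ ‖g x‖} → (f 0 : AddCircle (1:ℝ) → ℂ) x = 0 :=
    (ae_all_iff).mpr hA
  have hBae : ∀ᵐ x ∂stmt18μ, ∀ j : ℕ,
      x ∈ {x | ‖g x‖ ≤ 1 - ((j:ℝ)+1)⁻¹} → (f 0 : AddCircle (1:ℝ) → ℂ) x = 0 :=
    (ae_all_iff).mpr hB
  have hnull' : ∀ᵐ x ∂stmt18μ, ‖g x‖ ≠ 1 := by
    rw [ae_iff]
    simpa [not_not] using hnull
  have hz : ∀ᵐ x ∂stmt18μ, (f 0 : AddCircle (1:ℝ) → ℂ) x = 0 := by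
    filter_upwards [hAae, hBae, hnull'] with x h1 h2 h3
    rcases lt_trichotomy (‖g x‖) 1 with h | h | h
    · obtain ⟨j, hj⟩ := exists_nat_one_div_lt (by linarith : (0:ℝ) < 1 - ‖g x‖)
      rw [one_div] at hj
      exact h2 j (show ‖g x‖ ≤ 1 - ((j:ℝ)+1)⁻¹ by linarith)
    · exact absurd h h3
    · obtain ⟨j, hj⟩ := exists_nat_one_div_lt (by linarith : (0:ℝ) < ‖g x‖ - 1)
      rw [one_div] at hj
      exact h1 j (show 1 + ((j:ℝ)+1)⁻¹ ≤ ‖g x‖ by linarith)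
  apply Lp.ext (μ := stmt18μ)
  filter_upwards [hz, Lp.coeFn_zero (E := ℂ) (p := 2) (μ := stmt18μ)] with x h1 h2
  rw [h1, h2]
  simp

lemma stmt18null (l : ℂ) (hl0 : l ≠ 0) (hl1 : l ≠ 1) :
    stmt18μ {x | ‖l⁻¹ * (fourier (-1) x - (1 - l))‖ = 1} = 0 := by
  set w : ℂ := 1 - l with hw
  have hw0 : w ≠ 0 := sub_ne_zero.mpr (Ne.symm hl1)
  set P : Polynomial ℂ := Polynomial.C (conj w) * Polynomial.X^2
      - Polynomial.C (1 + w * conj w - l * conj l) * Polynomial.X + Polynomial.C w with hP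
  have hPne : P ≠ 0 := by
    intro h
    have hc : P.coeff 2 = conj w := by
      simp [hP, Polynomial.coeff_add, Polynomial.coeff_sub, Polynomial.coeff_C_mul,
        Polynomial.coeff_X_pow, Polynomial.coeff_C, Polynomial.coeff_X, Polynomial.coeff_one]
    rw [h] at hc
    simp only [Polynomial.coeff_zero] at hc
    exact hw0 (star_eq_zero.mp hc.symm)
  have hinj : Function.Injective (fun x : AddCircle (1:ℝ) => (fourier (-1) x : ℂ)) := by
    intro x y hxy
    simp only [fourier_apply] at hxy
    have h1 := injective_toCircle (T := 1) one_ne_zero (Subtype.coe_injective hxy)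
    have h2 : (-1 : ℤ) • x = -x := by simp
    have h3 : (-1 : ℤ) • y = -y := by simp
    rw [h2, h3] at h1
    exact neg_injective h1
  have hsub : {x : AddCircle (1:ℝ) | ‖l⁻¹ * (fourier (-1) x - (1 - l))‖ = 1} ⊆
      (fun x : AddCircle (1:ℝ) => (fourier (-1) x : ℂ)) ⁻¹' {z | P.IsRoot z} := by
    intro x hx
    simp only [mem_setOf_eq] at hx
    set u : ℂ := fourier (-1) x with hu
    have hu1 : ‖u‖ = 1 := by
      rw [hu]; simp [fourier_apply, Circle.norm_coe]
    have h2 : u * conj u = 1 := by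
      rw [Complex.mul_conj, Complex.normSq_eq_norm_sq, hu1]
      norm_num
    have h3 : ‖u - w‖ = ‖l‖ := by
      rw [norm_mul, norm_inv] at hx
      rw [← hw] at hx
      have hla : ‖l‖ ≠ 0 := by simpa using hl0
      field_simp at hx
      exact hx
    have h1 : (u - w) * (conj u - conj w) = l * conj l := by
      have := Complex.mul_conj (u - w)
      rw [map_sub] at this
      rw [this, Complex.mul_conj]
      rw [Complex.normSq_eq_norm_sq, Complex.normSq_eq_norm_sq, h3]
    show P.IsRoot u
    simp only [hP, Polynomial.IsRoot.def, Polynomial.eval_add, Polynomial.eval_sub,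
      Polynomial.eval_mul, Polynomial.eval_pow, Polynomial.eval_C, Polynomial.eval_X]
    linear_combination (-u) * h1 + (u - w) * h2
  have hfin : ({x : AddCircle (1:ℝ) | ‖l⁻¹ * (fourier (-1) x - (1 - l))‖ = 1}).Finite := by
    apply Set.Finite.subset _ hsub
    exact Set.Finite.preimage (Set.injOn_of_injective hinj)
      (Polynomial.finite_setOf_isRoot hPne)
  exact hfin.countable.measure_zero stmt18μ


-- main theorem
theorem stmt18 {H : Type*} [NormedAddCommGroup H] [InnerProductSpace ℂ H]
    [CompleteSpace H]
    (e : HilbertBasis ℤ ℂ H)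
    (U : H →L[ℂ] H) (hU : ∀ n : ℤ, U (e n) = e (n + 1))
    (l : ℂ) (hl : l ≠ 1)
    (X : H →L[ℂ] H)
    (hX : (1 - ContinuousLinearMap.adjoint U).comp X =
        l • (X.comp (1 - ContinuousLinearMap.adjoint U))) :
    X = 0 := by
  have horth := orthonormal_iff_ite.mp e.orthonormal
  have hdense : Dense (Submodule.span ℂ (Set.range ⇑e) : Set H) :=
    Submodule.dense_iff_topologicalClosure_eq_top.mpr e.dense_span
  -- adjoint shifts backwards
  have hUe : ∀ n : ℤ, ContinuousLinearMap.adjoint U (e n) = e (n - 1) := by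
    intro n
    apply e.repr.injective
    apply lp.ext
    funext m
    rw [e.repr_apply_apply, e.repr_apply_apply]
    rw [ContinuousLinearMap.adjoint_inner_right, hU m, horth, horth]
    simp only [show (m + 1 = n) ↔ (m = n - 1) from by omega]
  -- pointwise version of hX
  have hXv : ∀ v : H, X v - ContinuousLinearMap.adjoint U (X v) =
      l • (X v - X (ContinuousLinearMap.adjoint U v)) := by
    intro v
    have h := ContinuousLinearMap.ext_iff.mp hX v
    simpa only [ContinuousLinearMap.comp_apply, ContinuousLinearMap.sub_apply,
      ContinuousLinearMap.one_apply, ContinuousLinearMap.smul_apply, map_sub] using h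
  have hcol : ∀ n : ℤ, X (e n) = 0 := by
    rcases eq_or_ne l 0 with hl0 | hl0
    · -- case l = 0
      intro n
      set c : H := X (e n) with hc
      have hfix : ContinuousLinearMap.adjoint U c = c := by
        have := hXv (e n)
        rw [hl0, zero_smul, sub_eq_zero] at this
        exact this.symm
      have hstep : ∀ m : ℤ, e.repr c m = e.repr c (m + 1) := by
        intro m
        rw [e.repr_apply_apply, e.repr_apply_apply]
        conv_lhs => rw [← hfix]
        rw [ContinuousLinearMap.adjoint_inner_right, hU m]
      have hiter : ∀ k : ℕ, ∀ m : ℤ, e.repr c m = e.repr c (m + k) := by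
        intro k
        induction k with
        | zero => intro m; simp
        | succ k ih =>
          intro m
          rw [ih m, hstep (m + k)]
          congr 1
          push_cast
          ring
      have hall : ∀ m : ℤ, e.repr c m = e.repr c 0 := by
        intro m
        rcases le_or_gt 0 m with h | h
        · have := hiter m.toNat 0
          rw [zero_add, Int.toNat_of_nonneg h] at this
          exact this.symm
        · have := hiter (-m).toNat m
          rw [Int.toNat_of_nonneg (by linarith), add_neg_cancel] at this
          exact this
      have hsum : Summable fun m : ℤ => ‖e.repr c m‖ ^ ((2:ℝ≥0∞)).toReal :=
        (memℓp_gen_iff (by norm_num)).mp (lp.memℓp (e.repr c))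
      have hsum0 : Summable fun _ : ℤ => ‖e.repr c 0‖ ^ ((2:ℝ≥0∞)).toReal := by
        apply hsum.congr
        intro m
        rw [hall m]
      have hz : ‖e.repr c 0‖ ^ ((2:ℝ≥0∞)).toReal = 0 := by
        rwa [summable_const_iff] at hsum0
      have hz2 : e.repr c 0 = 0 := by
        have h2 : ((2:ℝ≥0∞)).toReal = (2:ℝ) := by norm_num
        rw [h2] at hz
        have := (Real.rpow_eq_zero (norm_nonneg _) (by norm_num)).mp hz
        exact norm_eq_zero.mp this
      have : e.repr c = 0 := by
        apply lp.ext
        funext m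
        rw [lp.coeFn_zero]
        simp only [Pi.zero_apply]
        rw [hall m, hz2]
      exact e.repr.map_eq_zero_iff.mp this
    · -- case l ≠ 0
      -- the recurrence
      have hrel : ∀ n : ℤ, X (e (n - 1)) =
          l⁻¹ • (ContinuousLinearMap.adjoint U (X (e n)) - (1 - l) • X (e n)) := by
        intro n
        have h := hXv (e n)
        rw [hUe n, smul_sub] at h
        have h2 : l • X (e (n - 1)) =
            ContinuousLinearMap.adjoint U (X (e n)) - (1 - l) • X (e n) := by
          calc l • X (e (n - 1))
              = l • X (e n) - (X (e n) - ContinuousLinearMap.adjoint U (X (e n))) :=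
                eq_sub_of_add_eq (by rw [h]; abel)
            _ = ContinuousLinearMap.adjoint U (X (e n)) - (1 - l) • X (e n) := by
                rw [sub_smul, one_smul]; abel
        rw [← h2, smul_smul, inv_mul_cancel₀ hl0, one_smul]
      set D : H →L[ℂ] H :=
        l⁻¹ • (ContinuousLinearMap.adjoint U - (1 - l) • (1 : H →L[ℂ] H)) with hD
      have hDv : ∀ v : H, D v = l⁻¹ • (ContinuousLinearMap.adjoint U v - (1 - l) • v) := by
        intro v
        simp only [hD, ContinuousLinearMap.smul_apply, ContinuousLinearMap.sub_apply,
          ContinuousLinearMap.one_apply]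
      have hrel' : ∀ n : ℤ, X (e (n - 1)) = D (X (e n)) := by
        intro n
        rw [hDv, hrel n]
      -- transport to L²
      set Φ : H ≃ₗᵢ[ℂ] Lp ℂ 2 stmt18μ := e.repr.trans fourierBasis.repr.symm with hΦ
      have hΦe : ∀ n : ℤ, Φ (e n) = fourierLp 2 n := by
        intro n
        simp only [hΦ, LinearIsometryEquiv.trans_apply]
        rw [e.repr_self]
        apply fourierBasis.repr.injective
        rw [LinearIsometryEquiv.apply_symm_apply, ← coe_fourierBasis (hT := stmt18_fact),
          fourierBasis.repr_self]
      set g : C(AddCircle (1:ℝ), ℂ) :=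
        l⁻¹ • (fourier (-1) - ContinuousMap.const _ (1 - l)) with hg
      have hgx : ∀ x : AddCircle (1:ℝ), g x = l⁻¹ * (fourier (-1) x - (1 - l)) := by
        intro x
        simp [hg, ContinuousMap.smul_apply, ContinuousMap.sub_apply,
          ContinuousMap.const_apply, smul_eq_mul]
      -- intertwining
      have hcomm : (Φ.toLinearIsometry.toContinuousLinearMap).comp D =
          (stmt18mul g).comp Φ.toLinearIsometry.toContinuousLinearMap := by
        apply ContinuousLinearMap.ext_on hdense
        rintro _ ⟨n, rfl⟩
        simp only [ContinuousLinearMap.comp_apply, LinearIsometry.coe_toContinuousLinearMap,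
          LinearIsometryEquiv.coe_toLinearIsometry]
        rw [hDv, hUe, _root_.map_smul, map_sub, _root_.map_smul, hΦe, hΦe]
        apply Lp.ext (μ := stmt18μ)
        have h1 := stmt18mul_ae g (fourierLp 2 n)
        have h2 := coeFn_fourierLp (T := (1:ℝ)) 2 n
        have h3 := coeFn_fourierLp (T := (1:ℝ)) 2 (n - 1)
        have h4 : (((l⁻¹ • ((fourierLp (T := (1:ℝ)) 2 (n - 1)) - (1 - l) • fourierLp 2 n)) :
            Lp ℂ 2 stmt18μ) : AddCircle (1:ℝ) → ℂ)
            =ᵐ[stmt18μ] fun x => l⁻¹ • (((fourierLp (T := (1:ℝ)) 2 (n - 1)) :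
              AddCircle (1:ℝ) → ℂ) x - (1 - l) • (fourierLp (T := (1:ℝ)) 2 n :
              AddCircle (1:ℝ) → ℂ) x) := by
          have e1 := Lp.coeFn_smul l⁻¹
            ((fourierLp (T := (1:ℝ)) 2 (n - 1)) - (1 - l) • fourierLp 2 n)
          have e2 := Lp.coeFn_sub (fourierLp (T := (1:ℝ)) 2 (n - 1))
            ((1 - l) • fourierLp 2 n)
          have e3 := Lp.coeFn_smul (1 - l) (fourierLp (T := (1:ℝ)) 2 n)
          filter_upwards [e1, e2, e3] with x a1 a2 a3
          rw [a1]
          simp only [Pi.smul_apply, a2, Pi.sub_apply, a3]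
        filter_upwards [h1, h2, h3, h4] with x a1 a2 a3 a4
        rw [a4, a1, a2, a3, hgx x]
        have hfmul : fourier (-1) x * fourier n x = fourier (n - 1) x := by
          rw [← fourier_add]
          congr 1
          ring
        simp only [smul_eq_mul]
        rw [← hfmul]
        ring
      set φ : ℤ → Lp ℂ 2 stmt18μ := fun m => Φ (X (e m)) with hφ
      have hφae : ∀ n : ℤ, ⇑(φ (n - 1)) =ᵐ[stmt18μ]
          fun x => g x * (φ n : AddCircle (1:ℝ) → ℂ) x := by
        intro n
        have h := ContinuousLinearMap.ext_iff.mp hcomm (X (e n))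
        simp only [ContinuousLinearMap.comp_apply, LinearIsometry.coe_toContinuousLinearMap,
          LinearIsometryEquiv.coe_toLinearIsometry] at h
        rw [← hrel' n] at h
        have : φ (n - 1) = stmt18mul g (φ n) := h
        rw [this]
        exact stmt18mul_ae g (φ n)
      have hrec : ∀ (n : ℤ) (k : ℕ), ⇑(φ (n - k)) =ᵐ[stmt18μ]
          fun x => (g x) ^ k * (φ n : AddCircle (1:ℝ) → ℂ) x := by
        intro n k
        induction k generalizing n with
        | zero =>
          simp only [Nat.cast_zero, sub_zero, pow_zero, one_mul]
          exact Filter.EventuallyEq.rfl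
        | succ k ih =>
          have h1 := ih (n - 1)
          have h2 := hφae n
          have hidx : n - ((k:ℕ)+1 : ℕ) = (n - 1) - (k : ℕ) := by push_cast; ring
          rw [hidx]
          filter_upwards [h1, h2] with x a1 a2
          rw [a1, a2]
          ring
      have hC : ∀ m : ℤ, ‖φ m‖ ≤ ‖X‖ := by
        intro m
        rw [hφ]
        simp only
        rw [Φ.norm_map]
        calc ‖X (e m)‖ ≤ ‖X‖ * ‖e m‖ := X.le_opNorm _
          _ = ‖X‖ := by rw [e.orthonormal.1 m, mul_one]
      have hnull : stmt18μ {x | ‖g x‖ = 1} = 0 := by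
        have h := stmt18null l hl0 hl
        have hset : {x : AddCircle (1:ℝ) | ‖g x‖ = 1} =
            {x : AddCircle (1:ℝ) | ‖l⁻¹ * (fourier (-1) x - (1 - l))‖ = 1} := by
          ext x
          rw [mem_setOf_eq, mem_setOf_eq, hgx x]
        rw [hset]
        exact h
      intro n₀
      have hkey := stmt18key g g.continuous.measurable hnull (fun m => φ (n₀ + m)) ‖X‖
        (fun m => hC _)
        (by
          intro n k
          have hidx : n₀ + (n - (k:ℕ)) = (n₀ + n) - (k:ℕ) := by ring
          show ⇑(φ (n₀ + (n - (k:ℕ)))) =ᵐ[stmt18μ] _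
          rw [hidx]
          exact hrec (n₀ + n) k)
      have : φ (n₀ + 0) = 0 := hkey
      rw [add_zero] at this
      have hXz : Φ (X (e n₀)) = 0 := this
      exact Φ.map_eq_zero_iff.mp hXz
  apply ContinuousLinearMap.ext_on hdense
  rintro _ ⟨n, rfl⟩
  rw [hcol n]
  simp
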